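/- Let V < 0 be continuous, t > 0, x ≥ x', |x| ≥ |x'|, and Φ(λ) = −tλ² + ∫_{x'}^x √(λ²−V(s)) ds. Suppose λ ranges over K = {0 < λ ≤ R⟨x⟩^{-μ/2}} and let M₁, M₂, c₂ be as above with c₂M₁ ≤ ∫_{x'}^x (λ²−V(s))^{-1/2}ds on K. If t > M₁/2, then with m := 2c₂^{-1}(M₁−2t)/M₂ < 0, one has |Φ'(λ)| ≥ (c₂/2)M₂ λ(λ² − m) and |Φ''(λ)| ≲ M₂(λ² + |m|) for all λ ∈ K. -/

import Mathlib

open Set intervalIntegral MeasureTheory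

lemma rpow_nhalf (y : ℝ) (hy : 0 < y) : y ^ (-(1:ℝ)/2) = (Real.sqrt y)⁻¹ := by
  rw [Real.sqrt_eq_rpow, ← Real.rpow_neg hy.le]
  norm_num
lemma rpow_n3half (y : ℝ) (hy : 0 < y) : y ^ (-(3:ℝ)/2) = ((Real.sqrt y)^3)⁻¹ := by
  rw [Real.sqrt_eq_rpow, ← Real.rpow_natCast (y ^ (1/(2:ℝ))) 3, ← Real.rpow_mul hy.le,
    ← Real.rpow_neg hy.le]
  norm_num

lemma bpos (l V : ℝ) (hV : V < 0) : 0 < l^2 - V := by nlinarith [sq_nonneg l]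

lemma ineq1 (l V : ℝ) (hV : V < 0) :
    l^2/2 * (l^2 - V) ^ (-(3:ℝ)/2) ≤ |V| ^ (-(1:ℝ)/2) - (l^2 - V) ^ (-(1:ℝ)/2) := by
  have hu : 0 < -V := by linarith
  have hb : 0 < l^2 - V := bpos l V hV
  rw [abs_of_neg hV, rpow_nhalf _ hu, rpow_nhalf _ hb, rpow_n3half _ hb]
  set A := Real.sqrt (-V) with hA
  set B := Real.sqrt (l^2 - V) with hB
  have hA0 : 0 < A := Real.sqrt_pos.2 hu
  have hB0 : 0 < B := Real.sqrt_pos.2 hb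
  have hA2 : A^2 = -V := Real.sq_sqrt hu.le
  have hB2 : B^2 = l^2 - V := Real.sq_sqrt hb.le
  have hAB : A ≤ B := Real.sqrt_le_sqrt (by nlinarith [sq_nonneg l])
  rw [show A⁻¹ - B⁻¹ = (B - A)/(A*B) by field_simp,
    show l^2/2 * (B^3)⁻¹ = l^2/(2*B^3) by ring, div_le_div_iff₀ (by positivity) (by positivity)]
  nlinarith [mul_nonneg (mul_nonneg hB0.le (sq_nonneg (B - A))) (show (0:ℝ) ≤ 2*B + A by linarith)]

lemma ineq2 (l V : ℝ) (hV : V < 0) :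
    |V| * (l^2 - V) ^ (-(5:ℝ)/2) ≤ (l^2 - V) ^ (-(3:ℝ)/2) := by
  have hb : 0 < l^2 - V := bpos l V hV
  have h1 : |V| * (l^2 - V) ^ (-(5:ℝ)/2) ≤ (l^2 - V) * (l^2 - V) ^ (-(5:ℝ)/2) := by
    apply mul_le_mul_of_nonneg_right _ (Real.rpow_nonneg hb.le _)
    rw [abs_of_neg hV]; nlinarith [sq_nonneg l]
  have h2 : (l^2 - V) * (l^2 - V) ^ (-(5:ℝ)/2) = (l^2 - V) ^ (-(3:ℝ)/2) := by
    nth_rewrite 1 [← Real.rpow_one (l^2 - V)]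
    rw [← Real.rpow_add hb]; norm_num
  linarith

lemma ineq3 (l V : ℝ) (hV : V < 0) :
    |V| ^ (-(1:ℝ)/2) - (l^2 - V) ^ (-(1:ℝ)/2) ≤ l^2/2 * |V| ^ (-(3:ℝ)/2) := by
  have hu : 0 < -V := by linarith
  have hb : 0 < l^2 - V := bpos l V hV
  rw [abs_of_neg hV, rpow_nhalf _ hu, rpow_nhalf _ hb, rpow_n3half _ hu]
  set A := Real.sqrt (-V) with hA
  set B := Real.sqrt (l^2 - V) with hB
  have hA0 : 0 < A := Real.sqrt_pos.2 hu
  have hB0 : 0 < B := Real.sqrt_pos.2 hb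
  have hA2 : A^2 = -V := Real.sq_sqrt hu.le
  have hB2 : B^2 = l^2 - V := Real.sq_sqrt hb.le
  have hAB : A ≤ B := Real.sqrt_le_sqrt (by nlinarith [sq_nonneg l])
  rw [show A⁻¹ - B⁻¹ = (B - A)/(A*B) by field_simp,
    show l^2/2 * (A^3)⁻¹ = l^2/(2*A^3) by ring, div_le_div_iff₀ (by positivity) (by positivity)]
  nlinarith [mul_nonneg (mul_nonneg hA0.le (sq_nonneg (B - A))) (show (0:ℝ) ≤ B + 2*A by linarith)]

lemma ineq4 (l V : ℝ) (hV : V < 0) :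
    (l^2 - V) ^ (-(3:ℝ)/2) ≤ |V| ^ (-(3:ℝ)/2) := by
  have hu : 0 < |V| := abs_pos.2 hV.ne
  refine Real.rpow_le_rpow_of_nonpos hu ?_ (by norm_num)
  rw [abs_of_neg hV]; nlinarith [sq_nonneg l]

lemma hasDeriv_pt1 (V k : ℝ) (hV : V < 0) :
    HasDerivAt (fun k : ℝ => Real.sqrt (k^2 - V)) (k * (k^2 - V) ^ (-(1:ℝ)/2)) k := by
  have hb : 0 < k^2 - V := bpos k V hV
  have h1 : HasDerivAt (fun k : ℝ => k^2 - V) (2*k) k := by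
    simpa using (hasDerivAt_pow 2 k).sub_const V
  have h2 := (Real.hasDerivAt_sqrt hb.ne').comp k h1
  refine h2.congr_deriv (Eq.symm ?_)
  have hs : Real.sqrt (k^2 - V) ≠ 0 := (Real.sqrt_pos.2 hb).ne'
  rw [show (-(1:ℝ)/2) = -(1/2) by norm_num, Real.rpow_neg hb.le, ← Real.sqrt_eq_rpow]
  field_simp

lemma hasDeriv_pt2 (V k : ℝ) (hV : V < 0) :
    HasDerivAt (fun k : ℝ => k * (k^2 - V) ^ (-(1:ℝ)/2))
      ((k^2 - V) ^ (-(1:ℝ)/2) - k^2 * (k^2 - V) ^ (-(3:ℝ)/2)) k := by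
  have hb : 0 < k^2 - V := bpos k V hV
  have h1 : HasDerivAt (fun k : ℝ => k^2 - V) (2*k) k := by
    simpa using (hasDerivAt_pow 2 k).sub_const V
  have h2 := h1.rpow_const (p := -(1:ℝ)/2) (Or.inl hb.ne')
  have h3 := (hasDerivAt_id k).mul h2
  refine h3.congr_deriv (Eq.symm ?_)
  have : (-(1:ℝ)/2 - 1) = -(3:ℝ)/2 := by norm_num
  rw [this]; simp; ring

lemma S_hasDeriv (V : ℝ → ℝ) (hVc : Continuous V) (hneg : ∀ s, V s < 0) (x' x l : ℝ) :
    HasDerivAt (fun l : ℝ => ∫ s in x'..x, Real.sqrt (l^2 - V s))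
      (∫ s in x'..x, l * (l^2 - V s) ^ (-(1:ℝ)/2)) l := by
  have hb : ∀ (k : ℝ) (s : ℝ), 0 < k^2 - V s := fun k s => bpos k (V s) (hneg s)
  have hcont : ∀ (k p : ℝ), Continuous (fun s => (k^2 - V s) ^ p) := fun k p =>
    (continuous_const.sub hVc).rpow_const (fun s => Or.inl (hb k s).ne')
  have hVpos : ∀ s, 0 < |V s| := fun s => abs_pos.2 (hneg s).ne
  have hVcont : ∀ p : ℝ, Continuous (fun s => |V s| ^ p) := fun p =>
    hVc.abs.rpow_const (fun s => Or.inl (hVpos s).ne')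
  have key := intervalIntegral.hasDerivAt_integral_of_dominated_loc_of_deriv_le
    (𝕜 := ℝ) (μ := volume) (F := fun k s => Real.sqrt (k^2 - V s))
    (F' := fun k s => k * (k^2 - V s) ^ (-(1:ℝ)/2)) (x₀ := l) (a := x') (b := x)
    (bound := fun s => (|l| + 1) * |V s| ^ (-(1:ℝ)/2)) (Metric.ball_mem_nhds l zero_lt_one)
    (Filter.Eventually.of_forall fun k =>
      (show Continuous fun s => Real.sqrt (k^2 - V s) from (continuous_const.sub hVc).sqrt.comp continuous_id).aestronglyMeasurable)
    (((continuous_const.sub hVc).sqrt).intervalIntegrable _ _)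
    ((continuous_const.mul (hcont l _)).aestronglyMeasurable)
    (Filter.Eventually.of_forall fun s _ k hk => by
      have hk' : |k| ≤ |l| + 1 := by
        have h1 := abs_sub_abs_le_abs_sub k l
        have h2 : |k - l| < 1 := by simpa [Real.dist_eq] using hk
        linarith
      have h3 : (k^2 - V s) ^ (-(1:ℝ)/2) ≤ |V s| ^ (-(1:ℝ)/2) := by
        refine Real.rpow_le_rpow_of_nonpos (hVpos s) ?_ (by norm_num)
        rw [abs_of_neg (hneg s)]; nlinarith [sq_nonneg k]
      rw [Real.norm_eq_abs, abs_mul, abs_of_nonneg (Real.rpow_nonneg (hb k s).le _)]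
      exact mul_le_mul hk' h3 (Real.rpow_nonneg (hb k s).le _) (by positivity))
    ((continuous_const.mul (hVcont _)).intervalIntegrable _ _)
    (Filter.Eventually.of_forall fun s _ k _ => hasDeriv_pt1 (V s) k (hneg s))
  exact key.2

lemma S2_hasDeriv (V : ℝ → ℝ) (hVc : Continuous V) (hneg : ∀ s, V s < 0) (x' x l : ℝ) :
    HasDerivAt (fun l : ℝ => ∫ s in x'..x, l * (l^2 - V s) ^ (-(1:ℝ)/2))
      (∫ s in x'..x, ((l^2 - V s) ^ (-(1:ℝ)/2) - l^2 * (l^2 - V s) ^ (-(3:ℝ)/2))) l := by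
  have hb : ∀ (k : ℝ) (s : ℝ), 0 < k^2 - V s := fun k s => bpos k (V s) (hneg s)
  have hcont : ∀ (k p : ℝ), Continuous (fun s => (k^2 - V s) ^ p) := fun k p =>
    (continuous_const.sub hVc).rpow_const (fun s => Or.inl (hb k s).ne')
  have hVpos : ∀ s, 0 < |V s| := fun s => abs_pos.2 (hneg s).ne
  have hVcont : ∀ p : ℝ, Continuous (fun s => |V s| ^ p) := fun p =>
    hVc.abs.rpow_const (fun s => Or.inl (hVpos s).ne')
  have hmono : ∀ (k : ℝ) (s : ℝ) (p : ℝ), p ≤ 0 → (k^2 - V s) ^ p ≤ |V s| ^ p := by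
    intro k s p hp
    refine Real.rpow_le_rpow_of_nonpos (hVpos s) ?_ hp
    rw [abs_of_neg (hneg s)]; nlinarith [sq_nonneg k]
  have key := intervalIntegral.hasDerivAt_integral_of_dominated_loc_of_deriv_le
    (𝕜 := ℝ) (μ := volume) (F := fun k s => k * (k^2 - V s) ^ (-(1:ℝ)/2))
    (F' := fun k s => (k^2 - V s) ^ (-(1:ℝ)/2) - k^2 * (k^2 - V s) ^ (-(3:ℝ)/2))
    (x₀ := l) (a := x') (b := x)
    (bound := fun s => |V s| ^ (-(1:ℝ)/2) + (|l| + 1)^2 * |V s| ^ (-(3:ℝ)/2)) (Metric.ball_mem_nhds l zero_lt_one)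
    (Filter.Eventually.of_forall fun k =>
      (continuous_const.mul (hcont k _)).aestronglyMeasurable)
    ((continuous_const.mul (hcont l _)).intervalIntegrable _ _)
    (((hcont l _).sub (continuous_const.mul (hcont l _))).aestronglyMeasurable)
    (Filter.Eventually.of_forall fun s _ k hk => by
      have hk' : |k| ≤ |l| + 1 := by
        have h1 := abs_sub_abs_le_abs_sub k l
        have h2 : |k - l| < 1 := by simpa [Real.dist_eq] using hk
        linarith
      have h3 : (k^2 - V s) ^ (-(1:ℝ)/2) ≤ |V s| ^ (-(1:ℝ)/2) := hmono k s _ (by norm_num)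
      have h4 : (k^2 - V s) ^ (-(3:ℝ)/2) ≤ |V s| ^ (-(3:ℝ)/2) := hmono k s _ (by norm_num)
      have h5 : k^2 * (k^2 - V s) ^ (-(3:ℝ)/2) ≤ (|l|+1)^2 * |V s| ^ (-(3:ℝ)/2) := by
        apply mul_le_mul _ h4 (Real.rpow_nonneg (hb k s).le _) (by positivity)
        calc k^2 = |k|^2 := (sq_abs k).symm
        _ ≤ (|l|+1)^2 := by nlinarith [abs_nonneg k]
      rw [Real.norm_eq_abs]
      have h6 : 0 ≤ (k^2 - V s) ^ (-(1:ℝ)/2) := Real.rpow_nonneg (hb k s).le _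
      have h7 : 0 ≤ k^2 * (k^2 - V s) ^ (-(3:ℝ)/2) := mul_nonneg (sq_nonneg k) (Real.rpow_nonneg (hb k s).le _)
      rw [abs_sub_comm, abs_le]
      constructor <;> nlinarith [Real.rpow_nonneg (abs_nonneg (V s)) (-(1:ℝ)/2),
        Real.rpow_nonneg (abs_nonneg (V s)) (-(3:ℝ)/2)])
    (((hVcont _).add (continuous_const.mul (hVcont _))).intervalIntegrable _ _)
    (Filter.Eventually.of_forall fun s _ k _ => hasDeriv_pt2 (V s) k (hneg s))
  exact key.2

set_option maxHeartbeats 2000000 in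
/-- Degenerate phase estimate after the critical time: if `t > M₁/2`, then with
`m := 2c₂⁻¹(M₁-2t)/M₂ < 0` the phase `Φ(λ) = -tλ² + ∫_{x'}^x √(λ²-V)` satisfies
`|Φ'(λ)| ≥ (c₂/2) M₂ λ(λ² - m)` and `|Φ''(λ)| ≲ M₂(λ² + |m|)` on
`K = {0 < λ ≤ R⟨x⟩^{-μ/2}}`. -/
theorem degenerate_phase_estimate (μ R : ℝ) (hμ : μ ∈ Ioo (0:ℝ) 2) (hR : 1 ≤ R)
    (V : ℝ → ℝ) (hVc : Continuous V) (hneg : ∀ s, V s < 0)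
    (t x x' c₂ : ℝ) (ht : 0 < t) (hxx' : x' < x) (hxa : |x'| ≤ |x|) (hc₂ : 0 < c₂)
    (M₁ M₂ : ℝ)
    (hM₁ : M₁ = ∫ s in x'..x, |V s| ^ (-(1:ℝ)/2))
    (hM₂ : M₂ = ∫ s in x'..x, |V s| ^ (-(3:ℝ)/2))
    (hlow1 : ∀ l : ℝ, 0 < l → l ≤ R * (1 + x^2) ^ (-(μ/4)) →
      c₂ * M₁ ≤ (∫ s in x'..x, (l^2 - V s) ^ (-(1:ℝ)/2)) ∧
      (∫ s in x'..x, (l^2 - V s) ^ (-(1:ℝ)/2)) ≤ M₁)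
    (hlow2 : ∀ l : ℝ, 0 < l → l ≤ R * (1 + x^2) ^ (-(μ/4)) →
      c₂ * M₂ ≤ (∫ s in x'..x, |V s| * (l^2 - V s) ^ (-(5:ℝ)/2)) ∧
      (∫ s in x'..x, |V s| * (l^2 - V s) ^ (-(5:ℝ)/2)) ≤ M₂)
    (htM : M₁ / 2 < t) :
    let Φ : ℝ → ℝ := fun l => -t * l^2 + ∫ s in x'..x, Real.sqrt (l^2 - V s)
    let m : ℝ := 2 * c₂⁻¹ * (M₁ - 2*t) / M₂
    m < 0 ∧
    (∀ l : ℝ, 0 < l → l ≤ R * (1 + x^2) ^ (-(μ/4)) →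
      (c₂/2) * M₂ * l * (l^2 - m) ≤ |deriv Φ l|) ∧
    (∃ Cc > (0:ℝ), ∀ l : ℝ, 0 < l → l ≤ R * (1 + x^2) ^ (-(μ/4)) →
      |deriv (deriv Φ) l| ≤ Cc * M₂ * (l^2 + |m|)) := by
  intro Φ m
  -- basic positivity and continuity facts
  have hbp : ∀ (k s : ℝ), 0 < k^2 - V s := fun k s => bpos k (V s) (hneg s)
  have hVpos : ∀ s, 0 < |V s| := fun s => abs_pos.2 (hneg s).ne
  have contB : ∀ (k p : ℝ), Continuous (fun s => (k^2 - V s) ^ p) := fun k p =>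
    (continuous_const.sub hVc).rpow_const (fun s => Or.inl (hbp k s).ne')
  have contVp : ∀ p : ℝ, Continuous (fun s => |V s| ^ p) := fun p =>
    hVc.abs.rpow_const (fun s => Or.inl (hVpos s).ne')
  have intB : ∀ (k p : ℝ), IntervalIntegrable (fun s => (k^2 - V s) ^ p) volume x' x :=
    fun k p => (contB k p).intervalIntegrable _ _
  have intV : ∀ p : ℝ, IntervalIntegrable (fun s => |V s| ^ p) volume x' x :=
    fun p => (contVp p).intervalIntegrable _ _
  have M₁pos : 0 < M₁ := by
    rw [hM₁]
    exact intervalIntegral.intervalIntegral_pos_of_pos (intV _)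
      (fun s => Real.rpow_pos_of_pos (hVpos s) _) hxx'
  have M₂pos : 0 < M₂ := by
    rw [hM₂]
    exact intervalIntegral.intervalIntegral_pos_of_pos (intV _)
      (fun s => Real.rpow_pos_of_pos (hVpos s) _) hxx'
  have hR0 : (0:ℝ) < R := by linarith
  have hlmax : (0:ℝ) < R * (1 + x^2) ^ (-(μ/4)) := by positivity
  have hc₂1 : c₂ ≤ 1 := by
    obtain ⟨ha, hb⟩ := hlow1 _ hlmax le_rfl
    nlinarith
  have hmneg : m < 0 := by
    show 2 * c₂⁻¹ * (M₁ - 2*t) / M₂ < 0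
    apply div_neg_of_neg_of_pos _ M₂pos
    exact mul_neg_of_pos_of_neg (by positivity) (by linarith)
  -- first derivative formula
  have hΦderiv : ∀ k : ℝ, deriv Φ k
      = -(2*t)*k + k * ∫ s in x'..x, (k^2 - V s) ^ (-(1:ℝ)/2) := by
    intro k
    have h1 : HasDerivAt (fun k : ℝ => -t * k^2) (-(2*t)*k) k := by
      have := (hasDerivAt_pow 2 k).const_mul (-t)
      refine this.congr_deriv (Eq.symm ?_)
      push_cast; ring
    have h2 := S_hasDeriv V hVc hneg x' x k
    have h4 : deriv Φ k = -(2*t)*k + ∫ s in x'..x, k * (k^2 - V s) ^ (-(1:ℝ)/2) :=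
      (h1.add h2).deriv
    rw [h4, intervalIntegral.integral_const_mul]
  -- second derivative formula
  have hΦ2 : ∀ k : ℝ, deriv (deriv Φ) k
      = -(2*t) + ((∫ s in x'..x, (k^2 - V s) ^ (-(1:ℝ)/2))
        - k^2 * ∫ s in x'..x, (k^2 - V s) ^ (-(3:ℝ)/2)) := by
    intro k
    have hfun : deriv Φ = fun k : ℝ =>
        -(2*t)*k + ∫ s in x'..x, k * (k^2 - V s) ^ (-(1:ℝ)/2) := by
      funext y
      rw [hΦderiv y, intervalIntegral.integral_const_mul]
    rw [hfun]
    have ha : HasDerivAt (fun k : ℝ => -(2*t)*k) (-(2*t)) k := by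
      simpa using (hasDerivAt_id k).const_mul (-(2*t))
    have hb2 := S2_hasDeriv V hVc hneg x' x k
    have h5 : deriv (fun k : ℝ => -(2*t)*k + ∫ s in x'..x, k * (k^2 - V s) ^ (-(1:ℝ)/2)) k = _ :=
      (ha.add hb2).deriv
    rw [h5, intervalIntegral.integral_sub (intB k _)
      (show IntervalIntegrable (fun s => k^2 * (k^2 - V s) ^ (-(3:ℝ)/2)) volume x' x from (continuous_const.mul (contB k _)).intervalIntegrable _ _),
      intervalIntegral.integral_const_mul]
  have hm' : (c₂/2) * M₂ * m = M₁ - 2*t := by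
    show (c₂/2) * M₂ * (2 * c₂⁻¹ * (M₁ - 2*t) / M₂) = M₁ - 2*t
    field_simp
  have hmabs : (c₂/2) * (M₂ * |m|) = 2*t - M₁ := by
    rw [abs_of_neg hmneg]
    show (c₂/2) * (M₂ * -(2 * c₂⁻¹ * (M₁ - 2*t) / M₂)) = 2*t - M₁
    field_simp
    ring
  clear_value Φ m
  refine ⟨hmneg, ?_, ?_⟩
  · -- lower bound on |Φ'|
    intro l hl0 hlK
    obtain ⟨hI1, hI2⟩ := hlow1 l hl0 hlK
    obtain ⟨hW1, hW2⟩ := hlow2 l hl0 hlK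
    -- key1 : (c₂/2) M₂ l² ≤ M₁ - I l
    have e1 : M₁ - (∫ s in x'..x, (l^2 - V s) ^ (-(1:ℝ)/2))
        = ∫ s in x'..x, (|V s| ^ (-(1:ℝ)/2) - (l^2 - V s) ^ (-(1:ℝ)/2)) := by
      rw [intervalIntegral.integral_sub (intV _) (intB l _), hM₁]
    have mono : (∫ s in x'..x, l^2/2 * (|V s| * (l^2 - V s) ^ (-(5:ℝ)/2)))
        ≤ ∫ s in x'..x, (|V s| ^ (-(1:ℝ)/2) - (l^2 - V s) ^ (-(1:ℝ)/2)) := by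
      apply intervalIntegral.integral_mono_on hxx'.le
        ((continuous_const.mul (hVc.abs.mul (contB l _))).intervalIntegrable _ _)
        (((contVp _).sub (contB l _)).intervalIntegrable _ _)
      intro s _
      calc l^2/2 * (|V s| * (l^2 - V s) ^ (-(5:ℝ)/2))
          ≤ l^2/2 * ((l^2 - V s) ^ (-(3:ℝ)/2)) :=
            mul_le_mul_of_nonneg_left (ineq2 l (V s) (hneg s)) (by positivity)
        _ ≤ |V s| ^ (-(1:ℝ)/2) - (l^2 - V s) ^ (-(1:ℝ)/2) := ineq1 l (V s) (hneg s)
    have e2 : (∫ s in x'..x, l^2/2 * (|V s| * (l^2 - V s) ^ (-(5:ℝ)/2)))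
        = l^2/2 * ∫ s in x'..x, |V s| * (l^2 - V s) ^ (-(5:ℝ)/2) :=
      intervalIntegral.integral_const_mul _ _
    have key1 : l^2/2 * (c₂ * M₂) ≤ M₁ - ∫ s in x'..x, (l^2 - V s) ^ (-(1:ℝ)/2) := by
      rw [e1]
      calc l^2/2 * (c₂ * M₂) ≤ l^2/2 * ∫ s in x'..x, |V s| * (l^2 - V s) ^ (-(5:ℝ)/2) :=
            mul_le_mul_of_nonneg_left hW1 (by positivity)
        _ = _ := e2.symm
        _ ≤ _ := mono
    have hd : deriv Φ l = l * ((∫ s in x'..x, (l^2 - V s) ^ (-(1:ℝ)/2)) - 2*t) := by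
      rw [hΦderiv l]; ring
    have hdnp : l * ((∫ s in x'..x, (l^2 - V s) ^ (-(1:ℝ)/2)) - 2*t) ≤ 0 :=
      mul_nonpos_of_nonneg_of_nonpos hl0.le (by linarith)
    rw [hd, abs_of_nonpos hdnp]
    nlinarith [mul_le_mul_of_nonneg_left key1 hl0.le,
      mul_le_mul_of_nonneg_left (le_of_eq hm') hl0.le,
      mul_le_mul_of_nonneg_left (ge_of_eq hm') hl0.le]
  · -- upper bound on |Φ''|
    refine ⟨2, by norm_num, ?_⟩
    intro l hl0 hlK
    obtain ⟨hI1, hI2⟩ := hlow1 l hl0 hlK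
    have hJnn : 0 ≤ ∫ s in x'..x, (l^2 - V s) ^ (-(3:ℝ)/2) :=
      intervalIntegral.integral_nonneg hxx'.le (fun s _ => Real.rpow_nonneg (hbp l s).le _)
    have hJle : (∫ s in x'..x, (l^2 - V s) ^ (-(3:ℝ)/2)) ≤ M₂ := by
      rw [hM₂]
      exact intervalIntegral.integral_mono_on hxx'.le (intB l _) (intV _)
        (fun s _ => ineq4 l (V s) (hneg s))
    have e1 : M₁ - (∫ s in x'..x, (l^2 - V s) ^ (-(1:ℝ)/2))
        = ∫ s in x'..x, (|V s| ^ (-(1:ℝ)/2) - (l^2 - V s) ^ (-(1:ℝ)/2)) := by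
      rw [intervalIntegral.integral_sub (intV _) (intB l _), hM₁]
    have hup : M₁ - (∫ s in x'..x, (l^2 - V s) ^ (-(1:ℝ)/2)) ≤ l^2/2 * M₂ := by
      rw [e1, hM₂, ← intervalIntegral.integral_const_mul]
      apply intervalIntegral.integral_mono_on hxx'.le
        (((contVp _).sub (contB l _)).intervalIntegrable _ _)
        ((continuous_const.mul (contVp _)).intervalIntegrable _ _)
      exact fun s _ => ineq3 l (V s) (hneg s)
    have hnonpos : -(2*t) + ((∫ s in x'..x, (l^2 - V s) ^ (-(1:ℝ)/2))
        - l^2 * ∫ s in x'..x, (l^2 - V s) ^ (-(3:ℝ)/2)) ≤ 0 := by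
      nlinarith [mul_nonneg (sq_nonneg l) hJnn]
    have h2tM : 2*t - M₁ ≤ M₂ * |m| := by
      nlinarith [mul_nonneg M₂pos.le (abs_nonneg m)]
    rw [hΦ2 l, abs_of_nonpos hnonpos]
    have hJprod := mul_le_mul_of_nonneg_left hJle (sq_nonneg l)
    have h9 := mul_nonneg M₂pos.le (abs_nonneg m)
    have h10 := mul_nonneg M₂pos.le (sq_nonneg l)
    linarith [hup, h2tM, hJprod]
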